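/- Let t = t(n) be a sequence with t = o(√n). Then S_{n,t} := Σ_{k=0}^{t} Q_{n,k}, where Q_{n,k} = (n/((k+1)(k+2))) · [∏_{j=0}^{k+1}(1 + j/n) − ∏_{j=0}^{k+1}(1 − j/n)], satisfies S_{n,t}/(t+1) → 1 as n → ∞. -/

import Mathlib

open Filter Finset

lemma prod_one_add_ge (x : ℕ → ℝ) (m : ℕ) (hx : ∀ j ∈ range m, 0 ≤ x j) :
    1 + ∑ j ∈ range m, x j ≤ ∏ j ∈ range m, (1 + x j) := by
  induction m with
  | zero => simp
  | succ m ih =>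
    have hxm : 0 ≤ x m := hx m (by simp)
    have hs : 0 ≤ ∑ j ∈ range m, x j :=
      Finset.sum_nonneg fun j hj => hx j (Finset.mem_range.2 (lt_trans (Finset.mem_range.1 hj) (Nat.lt_succ_self m)))
    have ih' := ih fun j hj => hx j (Finset.mem_range.2 (lt_trans (Finset.mem_range.1 hj) (Nat.lt_succ_self m)))
    rw [Finset.sum_range_succ, Finset.prod_range_succ]
    nlinarith [ih']

lemma prod_one_sub_nonneg (x : ℕ → ℝ) (m : ℕ) (hx : ∀ j ∈ range m, x j ≤ 1) :
    0 ≤ ∏ j ∈ range m, (1 - x j) :=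
  Finset.prod_nonneg fun j hj => by linarith [hx j hj]

lemma prod_one_sub_ge (x : ℕ → ℝ) (m : ℕ) (hx0 : ∀ j ∈ range m, 0 ≤ x j)
    (hx1 : ∀ j ∈ range m, x j ≤ 1) :
    1 - ∑ j ∈ range m, x j ≤ ∏ j ∈ range m, (1 - x j) := by
  induction m with
  | zero => simp
  | succ m ih =>
    have hmem : ∀ j ∈ range m, j ∈ range (m+1) := fun j hj =>
      Finset.mem_range.2 (lt_trans (Finset.mem_range.1 hj) (Nat.lt_succ_self m))
    have hxm0 : 0 ≤ x m := hx0 m (by simp)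
    have hxm1 : x m ≤ 1 := hx1 m (by simp)
    have ih' := ih (fun j hj => hx0 j (hmem j hj)) (fun j hj => hx1 j (hmem j hj))
    have hQ0 : 0 ≤ ∏ j ∈ range m, (1 - x j) :=
      prod_one_sub_nonneg x m (fun j hj => hx1 j (hmem j hj))
    have hs : 0 ≤ ∑ j ∈ range m, x j :=
      Finset.sum_nonneg fun j hj => hx0 j (hmem j hj)
    rw [Finset.sum_range_succ, Finset.prod_range_succ]
    nlinarith

lemma diff_bounds (x : ℕ → ℝ) (m : ℕ) (hx0 : ∀ j ∈ range m, 0 ≤ x j)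
    (hx1 : ∀ j ∈ range m, x j ≤ 1) :
    2 * ∑ j ∈ range m, x j ≤ ∏ j ∈ range m, (1 + x j) - ∏ j ∈ range m, (1 - x j) ∧
    ∏ j ∈ range m, (1 + x j) - ∏ j ∈ range m, (1 - x j)
      ≤ (2 * ∑ j ∈ range m, x j) * ∏ j ∈ range m, (1 + x j) := by
  induction m with
  | zero => simp
  | succ m ih =>
    have hmem : ∀ j ∈ range m, j ∈ range (m+1) := fun j hj =>
      Finset.mem_range.2 (lt_trans (Finset.mem_range.1 hj) (Nat.lt_succ_self m))
    have hx0' : ∀ j ∈ range m, 0 ≤ x j := fun j hj => hx0 j (hmem j hj)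
    have hx1' : ∀ j ∈ range m, x j ≤ 1 := fun j hj => hx1 j (hmem j hj)
    obtain ⟨ihl, ihu⟩ := ih hx0' hx1'
    have hxm0 : 0 ≤ x m := hx0 m (by simp)
    have hxm1 : x m ≤ 1 := hx1 m (by simp)
    rw [Finset.sum_range_succ, Finset.prod_range_succ, Finset.prod_range_succ]
    set P := ∏ j ∈ range m, (1 + x j) with hP
    set Qp := ∏ j ∈ range m, (1 - x j) with hQp
    set s := ∑ j ∈ range m, x j with hs
    have hs0 : 0 ≤ s := Finset.sum_nonneg hx0'
    have hP1 : 1 + s ≤ P := prod_one_add_ge x m hx0'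
    have hQ0 : 0 ≤ Qp := prod_one_sub_nonneg x m hx1'
    have hQ1 : 1 - s ≤ Qp := prod_one_sub_ge x m hx0' hx1'
    have hQP : Qp ≤ P := Finset.prod_le_prod (fun j hj => by linarith [hx1' j hj])
      (fun j hj => by linarith [hx0' j hj])
    have hsum2 : 2 ≤ P + Qp := by
      rcases le_or_gt s 1 with h | h
      · linarith
      · linarith
    have hP0 : (0:ℝ) ≤ P := by linarith
    constructor
    · nlinarith
    · nlinarith [mul_le_mul_of_nonneg_left hQP hxm0,
        mul_nonneg (mul_nonneg (by linarith : (0:ℝ) ≤ 2*(s + x m)) hP0) hxm0]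

/-- The exact finite-width RNN signal energy `Q_{n,k}` in product form. -/
noncomputable def Q (n k : ℕ) : ℝ :=
  ((n : ℝ) / ((k + 1) * (k + 2))) *
    (∏ j ∈ Finset.range (k + 2), (1 + (j : ℝ) / n) -
     ∏ j ∈ Finset.range (k + 2), (1 - (j : ℝ) / n))

/-- The cumulative LRU signal energy `S_{n,t} = Σ_{k=0}^t Q_{n,k}`. -/
noncomputable def S (n t : ℕ) : ℝ := ∑ k ∈ Finset.range (t + 1), Q n k

lemma Q_bounds (n k : ℕ) (hk : k + 1 ≤ n) :
    1 ≤ Q n k ∧ Q n k ≤ Real.exp (((k:ℝ)+1)*((k:ℝ)+2)/(2*n)) := by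
  have hn : 0 < n := lt_of_lt_of_le (Nat.succ_pos k) hk
  have hnR : (0:ℝ) < n := by exact_mod_cast hn
  set x : ℕ → ℝ := fun j => (j:ℝ)/n with hx
  have hx0 : ∀ j ∈ range (k+2), 0 ≤ x j := fun j _ =>
    div_nonneg (Nat.cast_nonneg j) hnR.le
  have hx1 : ∀ j ∈ range (k+2), x j ≤ 1 := by
    intro j hj
    have : j ≤ n := by
      have := Finset.mem_range.1 hj; omega
    rw [hx]
    exact div_le_one_of_le₀ (by exact_mod_cast this) hnR.le
  obtain ⟨hl, hu⟩ := diff_bounds x (k+2) hx0 hx1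
  have hsum : ∑ j ∈ range (k+2), x j = ((k:ℝ)+1)*((k:ℝ)+2)/(2*n) := by
    have h : (∑ i ∈ range (k+2), i) * 2 = (k+2)*(k+1) := by
      simpa using Finset.sum_range_id_mul_two (k+2)
    have hR := congrArg (fun z : ℕ => (z:ℝ)) h
    push_cast at hR
    have h1 : ∑ j ∈ range (k+2), x j = (∑ j ∈ range (k+2), (j:ℝ))/n := by
      rw [hx]; rw [Finset.sum_div]
    have hj' : (∑ j ∈ range (k+2), (j:ℝ)) = ((k:ℝ)+1)*((k:ℝ)+2)/2 := by linarith
    rw [h1, hj']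
    ring
  have hc : (0:ℝ) < ((k:ℝ)+1)*((k:ℝ)+2) := by positivity
  have hQeq : Q n k = ((n:ℝ) / (((k:ℝ)+1)*((k:ℝ)+2))) *
      (∏ j ∈ range (k+2), (1 + x j) - ∏ j ∈ range (k+2), (1 - x j)) := by
    rw [Q]
  have hP0 : (0:ℝ) ≤ ∏ j ∈ range (k+2), (1 + x j) :=
    Finset.prod_nonneg fun j hj => by linarith [hx0 j hj]
  have hPexp : ∏ j ∈ range (k+2), (1 + x j) ≤ Real.exp (((k:ℝ)+1)*((k:ℝ)+2)/(2*n)) := by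
    rw [← hsum, Real.exp_sum]
    exact Finset.prod_le_prod (fun j hj => by linarith [hx0 j hj])
      (fun j hj => by linarith [Real.add_one_le_exp (x j)])
  have hcoef : (0:ℝ) < (n:ℝ) / (((k:ℝ)+1)*((k:ℝ)+2)) := by positivity
  have h2s : 2 * ∑ j ∈ range (k+2), x j = ((k:ℝ)+1)*((k:ℝ)+2)/n := by
    rw [hsum]; field_simp
  constructor
  · rw [hQeq]
    have : ((n:ℝ) / (((k:ℝ)+1)*((k:ℝ)+2))) * (((k:ℝ)+1)*((k:ℝ)+2)/n) = 1 := by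
      field_simp
    calc (1:ℝ) = ((n:ℝ) / (((k:ℝ)+1)*((k:ℝ)+2))) * (((k:ℝ)+1)*((k:ℝ)+2)/n) := this.symm
      _ ≤ _ := by
          apply mul_le_mul_of_nonneg_left _ hcoef.le
          rw [← h2s]; exact hl
  · rw [hQeq]
    calc ((n:ℝ) / (((k:ℝ)+1)*((k:ℝ)+2))) *
        (∏ j ∈ range (k+2), (1 + x j) - ∏ j ∈ range (k+2), (1 - x j))
        ≤ ((n:ℝ) / (((k:ℝ)+1)*((k:ℝ)+2))) *
          ((2 * ∑ j ∈ range (k+2), x j) * ∏ j ∈ range (k+2), (1 + x j)) :=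
          mul_le_mul_of_nonneg_left hu hcoef.le
      _ = ∏ j ∈ range (k+2), (1 + x j) := by
          rw [h2s]; field_simp
      _ ≤ _ := hPexp

theorem S_subcritical_regime (t : ℕ → ℕ)
    (ht : Tendsto (fun n => (t n : ℝ) / Real.sqrt n) atTop (nhds 0)) :
    Tendsto (fun n => S n (t n) / (t n + 1)) atTop (nhds 1) := by
  have hev : ∀ᶠ n in atTop, t n + 1 ≤ n := by
    have h1 : ∀ᶠ n in atTop, (t n:ℝ)/Real.sqrt n < 1/2 :=
      ht.eventually (gt_mem_nhds (by norm_num))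
    filter_upwards [h1, eventually_ge_atTop 2] with n h1 h2
    have hn1 : (1:ℝ) ≤ (n:ℝ) := by exact_mod_cast le_trans (by norm_num) h2
    have hn2 : (2:ℝ) ≤ (n:ℝ) := by exact_mod_cast h2
    have hs0 : 0 < Real.sqrt n := Real.sqrt_pos.2 (by linarith)
    have ht2 : (t n:ℝ) < Real.sqrt n / 2 := by
      rw [div_lt_iff₀ hs0] at h1; linarith
    have hsn : Real.sqrt n ≤ n := by
      have h := Real.sqrt_le_sqrt (by nlinarith : (n:ℝ) ≤ (n:ℝ)^2)
      rwa [Real.sqrt_sq (by linarith)] at h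
    have : (t n:ℝ) + 1 < n := by linarith
    exact_mod_cast this.le
  have h2' : Tendsto (fun n : ℕ => ((t n:ℝ)+2)/Real.sqrt n) atTop (nhds 0) := by
    have hsq : Tendsto (fun n : ℕ => Real.sqrt n) atTop atTop := by
      apply tendsto_atTop_atTop.2
      intro b
      refine ⟨⌈b^2⌉₊, fun n hn => ?_⟩
      rcases le_or_gt b 0 with h|h
      · exact h.trans (Real.sqrt_nonneg _)
      · have hb2 : b^2 ≤ (n:ℝ) := le_trans (Nat.le_ceil _) (by exact_mod_cast hn)
        calc b = Real.sqrt (b^2) := (Real.sqrt_sq h.le).symm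
          _ ≤ _ := Real.sqrt_le_sqrt hb2
    have hc : Tendsto (fun n : ℕ => (2:ℝ)/Real.sqrt n) atTop (nhds 0) :=
      tendsto_const_nhds.div_atTop hsq
    have := ht.add hc
    simp only [add_zero] at this
    convert this using 2 with n
    rw [add_div]
  have he0 : Tendsto (fun n : ℕ => ((t n:ℝ)+1)*((t n:ℝ)+2)/(2*n)) atTop (nhds 0) := by
    have hup := h2'.mul h2'
    simp only [mul_zero] at hup
    apply tendsto_of_tendsto_of_tendsto_of_le_of_le' tendsto_const_nhds hup
    · filter_upwards [eventually_ge_atTop 1] with n hn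
      have : (0:ℝ) < n := by exact_mod_cast hn
      positivity
    · filter_upwards [eventually_ge_atTop 1] with n hn
      have hn1 : (1:ℝ) ≤ (n:ℝ) := by exact_mod_cast hn
      have hsq : Real.sqrt n * Real.sqrt n = n := Real.mul_self_sqrt (by linarith)
      have hs0 : 0 < Real.sqrt n := Real.sqrt_pos.2 (by linarith)
      rw [div_mul_div_comm, hsq, div_le_div_iff₀ (by linarith) (by linarith)]
      have h0 : (0:ℝ) ≤ (t n : ℝ) := Nat.cast_nonneg _
      nlinarith
  have hexp : Tendsto (fun n : ℕ => Real.exp (((t n:ℝ)+1)*((t n:ℝ)+2)/(2*n)))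
      atTop (nhds 1) := by
    have := (Real.continuous_exp.tendsto 0).comp he0
    simpa [Function.comp_def] using this
  apply tendsto_of_tendsto_of_tendsto_of_le_of_le' tendsto_const_nhds hexp
  · filter_upwards [hev] with n h1
    have htp : (0:ℝ) < (t n:ℝ)+1 := by positivity
    rw [le_div_iff₀ htp, one_mul]
    have : ((t n:ℝ)+1) = ∑ _k ∈ range (t n + 1), (1:ℝ) := by simp
    rw [this, S]
    apply Finset.sum_le_sum
    intro k hk
    have hk' : k + 1 ≤ n := by
      have := Finset.mem_range.1 hk; omega
    exact (Q_bounds n k hk').1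
  · filter_upwards [hev] with n h1
    have htp : (0:ℝ) < (t n:ℝ)+1 := by positivity
    rw [div_le_iff₀ htp]
    have hn0 : (0:ℝ) < n := by
      have : 0 < n := by omega
      exact_mod_cast this
    calc S n (t n) ≤ ∑ _k ∈ range (t n + 1), Real.exp (((t n:ℝ)+1)*((t n:ℝ)+2)/(2*n)) := by
          apply Finset.sum_le_sum
          intro k hk
          have hkt : k ≤ t n := by
            have := Finset.mem_range.1 hk; omega
          have hk' : k + 1 ≤ n := by omega
          refine le_trans (Q_bounds n k hk').2 (Real.exp_le_exp.2 ?_)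
          have hktR : (k:ℝ) ≤ t n := by exact_mod_cast hkt
          gcongr <;> linarith
      _ = Real.exp (((t n:ℝ)+1)*((t n:ℝ)+2)/(2*n)) * ((t n:ℝ)+1) := by
          rw [Finset.sum_const, Finset.card_range, nsmul_eq_mul]
          push_cast
          ring
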